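/- The Haar state on a compact quantum group is unique: if h and h' are states on A both satisfying ξ ∗ h = h ∗ ξ = ξ(1) h for all continuous linear functionals ξ (equivalently a ∗ h = h ∗ a = h(a)·1 for all a ∈ A), then h = h'. -/

import Mathlib

open TensorProduct

noncomputable section

variable {A : Type*} [NormedRing A] [NormedAlgebra ℂ A] [StarRing A]
  [CStarRing A] [StarModule ℂ A]

/-- The convolution `ξ ∗ a = (id ⊗ ξ)Φ(a)` of a functional with an algebra element. -/
def convR (Φ : A →ₐ[ℂ] A ⊗[ℂ] A) (ξ : A →ₗ[ℂ] ℂ) (a : A) : A :=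
  (TensorProduct.rid ℂ A) ((TensorProduct.map LinearMap.id ξ) (Φ a))

/-- The convolution `a ∗ ξ = (ξ ⊗ id)Φ(a)`. -/
def convL (Φ : A →ₐ[ℂ] A ⊗[ℂ] A) (ξ : A →ₗ[ℂ] ℂ) (a : A) : A :=
  (TensorProduct.lid ℂ A) ((TensorProduct.map ξ LinearMap.id) (Φ a))

/-- A state on the C*-algebra `A`: a positive normalized linear functional. -/
def IsState (h : A →ₗ[ℂ] ℂ) : Prop :=
  h 1 = 1 ∧ ∀ a : A, ∃ r : ℝ, 0 ≤ r ∧ h (star a * a) = (r : ℂ)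

/-- Uniqueness of the Haar state on a compact quantum group `G = (A, Φ)`:
if two states `h, h'` both satisfy `a ∗ h = h ∗ a = h(a)·1` for all `a ∈ A`,
then `h = h'`.  (The tensor product `A ⊗ A` carries the C*-topology, here an
arbitrary topological-space instance, used for the density axioms.) -/
theorem haar_state_unique [CompleteSpace A] [TopologicalSpace (A ⊗[ℂ] A)]
    (Φ : A →ₐ[ℂ] A ⊗[ℂ] A)
    (hcoassoc : (Algebra.TensorProduct.assoc ℂ ℂ ℂ A A A).toAlgHom.comp
        ((Algebra.TensorProduct.map Φ (AlgHom.id ℂ A)).comp Φ) =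
      (Algebra.TensorProduct.map (AlgHom.id ℂ A) Φ).comp Φ)
    (hdense₁ : Dense (Submodule.span ℂ
        {x : A ⊗[ℂ] A | ∃ b c : A, x = (b ⊗ₜ[ℂ] (1 : A)) * Φ c} : Set (A ⊗[ℂ] A)))
    (hdense₂ : Dense (Submodule.span ℂ
        {x : A ⊗[ℂ] A | ∃ b c : A, x = ((1 : A) ⊗ₜ[ℂ] b) * Φ c} : Set (A ⊗[ℂ] A)))
    (h h' : A →ₗ[ℂ] ℂ) (hs : IsState h) (hs' : IsState h')
    (hHaar : ∀ a : A, convR Φ h a = h a • (1 : A) ∧ convL Φ h a = h a • (1 : A))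
    (hHaar' : ∀ a : A, convR Φ h' a = h' a • (1 : A) ∧ convL Φ h' a = h' a • (1 : A)) :
    h = h' := by
  have key : ∀ x : A ⊗[ℂ] A,
      h' ((TensorProduct.rid ℂ A) ((TensorProduct.map LinearMap.id h) x))
        = h ((TensorProduct.lid ℂ A) ((TensorProduct.map h' LinearMap.id) x)) := by
    intro x
    induction x using TensorProduct.induction_on with
    | zero => simp
    | tmul b c =>
        simp [TensorProduct.rid_tmul, TensorProduct.lid_tmul, mul_comm]
    | add x y hx hy => simp [map_add, hx, hy]
  ext a
  have e1 : h' (convR Φ h a) = h a := by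
    rw [(hHaar a).1, map_smul, hs'.1]; simp
  have e2 : h (convL Φ h' a) = h' a := by
    rw [(hHaar' a).2, map_smul, hs.1]; simp
  have := key (Φ a)
  rw [show (TensorProduct.rid ℂ A) ((TensorProduct.map LinearMap.id h) (Φ a)) = convR Φ h a from rfl,
    show (TensorProduct.lid ℂ A) ((TensorProduct.map h' LinearMap.id) (Φ a)) = convL Φ h' a from rfl,
    e1, e2] at this
  exact this

end
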